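/- Let (u_ε)_{ε∈(0,1]} be a net of Schwartz functions on ℝ^d for which there exists N ∈ ℕ with μ_{q,l}(u_ε) = O(ε^{-N}) as ε→0 for all (q,l) ∈ ℕ² (a bound uniform in both indices). Then there exists N' ∈ ℕ such that μ_{q,l}(û_ε) = O(ε^{-N'}) as ε→0 for all (q,l) ∈ ℕ². -/

import Mathlib

open Set MeasureTheory

/-- The Fourier transform `û(ξ) = ∫ e^{-i x·ξ} u(x) dx` on `ℝ^d`. -/
noncomputable def ftransform (d : ℕ) (u : EuclideanSpace ℝ (Fin d) → ℂ) :
    EuclideanSpace ℝ (Fin d) → ℂ :=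
  fun ξ => ∫ x, Complex.exp (-(Complex.I * ((inner ℝ x ξ : ℝ) : ℂ))) * u x

open SchwartzMap Real FourierTransform in
/-- Regularity theorem for the Fourier transform: uniform moderate bounds
`μ_{q,l}(u_ε) = O(ε^{-N})` are transformed into uniform moderate bounds for `û_ε`. -/
theorem stmt12 (d : ℕ) (u : ℝ → SchwartzMap (EuclideanSpace ℝ (Fin d)) ℂ)
    (hu : ∃ N : ℕ, ∀ q l : ℕ, ∃ C > (0:ℝ), ∃ ε₀ ∈ Ioc (0:ℝ) 1, ∀ ε ∈ Ioo (0:ℝ) ε₀,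
      ∀ x, ∀ n ≤ l, (1 + ‖x‖) ^ q * ‖iteratedFDeriv ℝ n (⇑(u ε)) x‖ ≤ C * ε ^ (-(N : ℝ))) :
    ∃ N' : ℕ, ∀ q l : ℕ, ∃ C > (0:ℝ), ∃ ε₀ ∈ Ioc (0:ℝ) 1, ∀ ε ∈ Ioo (0:ℝ) ε₀,
      ∀ ξ, ∀ n ≤ l,
        (1 + ‖ξ‖) ^ q * ‖iteratedFDeriv ℝ n (ftransform d (⇑(u ε))) ξ‖
          ≤ C * ε ^ (-(N' : ℝ)) := by
  obtain ⟨N, hN⟩ := hu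
  set E := EuclideanSpace ℝ (Fin d) with hE
  have h2π : ((2 * Real.pi)⁻¹ : ℝ) ≠ 0 := by
    have := Real.pi_pos; positivity
  let g : E ≃L[ℝ] E :=
    (LinearEquiv.smulOfNeZero ℝ E _ h2π).toContinuousLinearEquiv
  let G : SchwartzMap E ℂ →L[ℝ] SchwartzMap E ℂ :=
    (SchwartzMap.compCLMOfContinuousLinearEquiv ℝ g).comp (fourierTransformCLM ℝ)
  have hG : ∀ f : SchwartzMap E ℂ, ftransform d (⇑f) = ⇑(G f) := by
    intro f
    funext ξ
    have hGf : G f ξ = 𝓕 (⇑f) ((2 * Real.pi)⁻¹ • ξ) := rfl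
    rw [hGf, Real.fourier_eq']
    unfold ftransform
    congr 1
    funext x
    rw [real_inner_smul_right, smul_eq_mul]
    congr 1
    have : (-2 * Real.pi * ((2 * Real.pi)⁻¹ * (inner ℝ x ξ : ℝ))) = -(inner ℝ x ξ : ℝ) := by
      field_simp
    rw [this]
    push_cast
    ring
  refine ⟨N, fun q l => ?_⟩
  -- the target seminorm, composed with `G`
  set fam := schwartzSeminormFamily ℝ E ℂ with hfam
  let Q : Seminorm ℝ (SchwartzMap E ℂ) :=
    (∑ m ∈ Finset.Iic ((q, l) : ℕ × ℕ), fam m).comp (G : SchwartzMap E ℂ →ₗ[ℝ] SchwartzMap E ℂ)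
  have hQ : ∀ f, Q f = ∑ m ∈ Finset.Iic ((q, l) : ℕ × ℕ), fam m (G f) := by
    intro f
    have hcoe : ⇑(∑ m ∈ Finset.Iic ((q, l) : ℕ × ℕ), fam m)
        = ∑ m ∈ Finset.Iic ((q, l) : ℕ × ℕ), ⇑(fam m) :=
      map_sum (FunLike.coeAddMonoidHom (Seminorm ℝ (SchwartzMap E ℂ)) (SchwartzMap E ℂ) ℝ) _ _
    rw [Seminorm.comp_apply, hcoe, Finset.sum_apply]
    rfl
  have hQcont : Continuous Q := by
    have : ⇑Q = fun f => ∑ m ∈ Finset.Iic ((q, l) : ℕ × ℕ), fam m (G f) := funext hQ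
    rw [this]
    exact continuous_finset_sum _ fun m _ =>
      ((schwartz_withSeminorms ℝ E ℂ).continuous_seminorm m).comp G.continuous
  obtain ⟨s, C, hC0, hle⟩ :=
    Seminorm.bound_of_continuous (schwartz_withSeminorms ℝ E ℂ) Q hQcont
  -- bound the finitely many seminorms in `s` by the hypothesis
  set k₀ := s.sup Prod.fst with hk₀
  set n₀ := s.sup Prod.snd with hn₀
  obtain ⟨C₁, hC₁, ε₀, hε₀, hbound⟩ := hN k₀ n₀
  refine ⟨2 ^ q * C * C₁, by positivity, ε₀, hε₀, fun ε hε ξ n hn => ?_⟩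
  have hεpow : (0:ℝ) < ε ^ (-(N:ℝ)) := Real.rpow_pos_of_pos hε.1 _
  have hsup : (s.sup fam) (u ε) ≤ C₁ * ε ^ (-(N : ℝ)) := by
    refine Seminorm.finset_sup_apply_le (by positivity) fun i hi => ?_
    refine SchwartzMap.seminorm_le_bound ℝ i.1 i.2 (u ε) (by positivity) fun x => ?_
    have h1 : ‖x‖ ^ i.1 ≤ (1 + ‖x‖) ^ k₀ := by
      calc ‖x‖ ^ i.1 ≤ (1 + ‖x‖) ^ i.1 := by
            exact pow_le_pow_left₀ (norm_nonneg _) (by linarith [norm_nonneg x]) _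
        _ ≤ (1 + ‖x‖) ^ k₀ :=
            pow_le_pow_right₀ (by linarith [norm_nonneg x]) (Finset.le_sup (f := Prod.fst) hi)
    calc ‖x‖ ^ i.1 * ‖iteratedFDeriv ℝ i.2 (⇑(u ε)) x‖
        ≤ (1 + ‖x‖) ^ k₀ * ‖iteratedFDeriv ℝ i.2 (⇑(u ε)) x‖ := by
          gcongr
      _ ≤ C₁ * ε ^ (-(N : ℝ)) := hbound ε hε x i.2 (Finset.le_sup (f := Prod.snd) hi)
  calc (1 + ‖ξ‖) ^ q * ‖iteratedFDeriv ℝ n (ftransform d (⇑(u ε))) ξ‖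
      = (1 + ‖ξ‖) ^ q * ‖iteratedFDeriv ℝ n (⇑(G (u ε))) ξ‖ := by rw [hG]
    _ ≤ 2 ^ q * (Finset.Iic ((q, l) : ℕ × ℕ)).sup fam (G (u ε)) :=
        SchwartzMap.one_add_le_sup_seminorm_apply (m := ((q, l) : ℕ × ℕ)) le_rfl hn _ ξ
    _ ≤ 2 ^ q * Q (u ε) := by
        gcongr
        exact Seminorm.le_def.mp
          (Seminorm.finset_sup_le_sum fam (Finset.Iic ((q, l) : ℕ × ℕ))) (G (u ε))
    _ ≤ 2 ^ q * (C * ((s.sup fam) (u ε))) := by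
        gcongr
        have := Seminorm.le_def.mp hle (u ε)
        simpa [Seminorm.smul_apply, NNReal.smul_def, smul_eq_mul] using this
    _ ≤ 2 ^ q * (C * (C₁ * ε ^ (-(N : ℝ)))) := by gcongr
    _ = 2 ^ q * C * C₁ * ε ^ (-(N : ℝ)) := by ring
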